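/- The coefficient of t in the strict order polynomial of the shrub S_n equals the n-th Bernoulli number b_n, for every n ≥ 1. -/

import Mathlib

lemma shrub_count (n m : ℕ) :
    Nat.card {f : Option (Fin n) → Fin m // ∀ i : Fin n, f none < f (some i)} =
      ∑ k ∈ Finset.range m, k ^ n := by
  have e : {f : Option (Fin n) → Fin m // ∀ i : Fin n, f none < f (some i)} ≃
      Σ j : Fin m, (Fin n → {x : Fin m // j < x}) :=
    { toFun := fun f => ⟨f.1 none, fun i => ⟨f.1 (some i), f.2 i⟩⟩
      invFun := fun p => ⟨fun o => o.elim p.1 (fun i => (p.2 i).1), fun i => (p.2 i).2⟩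
      left_inv := fun f => by ext o; cases o <;> rfl
      right_inv := fun p => rfl }
  rw [Nat.card_congr e, Nat.card_eq_fintype_card, Fintype.card_sigma]
  have hcard : ∀ j : Fin m, Fintype.card (Fin n → {x : Fin m // j < x}) = (m - 1 - j) ^ n := by
    intro j
    rw [Fintype.card_fun, Fintype.card_subtype, Finset.filter_lt_eq_Ioi, Fin.card_Ioi,
      Fintype.card_fin]
  simp only [hcard]
  rw [Fin.sum_univ_eq_sum_range (fun j => (m - 1 - j) ^ n) m, ← Finset.sum_range_reflect]
  exact Finset.sum_congr rfl fun j hj => by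
    rw [Finset.mem_range] at hj; congr 1; omega

/-- Let `Q` be the strict order polynomial of the shrub `S_n` (root `none` below `n` pairwise
incomparable children `some i`), i.e. the polynomial whose value at each positive integer `m`
is the number of strictly order-preserving maps `S_n → [m]`. For `n ≥ 1`, the coefficient of
`t` in `Q` is the `n`-th Bernoulli number. -/
theorem stmt_10 (n : ℕ) (hn : 1 ≤ n) (Q : Polynomial ℚ)
    (hQ : ∀ m : ℕ, 1 ≤ m → Q.eval (m : ℚ)
      = (Nat.card {f : Option (Fin n) → Fin m // ∀ i : Fin n, f none < f (some i)} : ℚ)) :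
    Q.coeff 1 = bernoulli n := by
  have hQ' : ∀ m : ℕ, 1 ≤ m → Q.eval (m : ℚ) = ∑ k ∈ Finset.range m, (k : ℚ) ^ n := by
    intro m hm
    rw [hQ m hm, shrub_count n m]
    push_cast
    rfl
  set P : Polynomial ℚ := ∑ i ∈ Finset.range (n + 1),
    Polynomial.C (bernoulli i * ((n + 1).choose i) / (n + 1)) * Polynomial.X ^ (n + 1 - i) with hP
  have hQP : Q = P := by
    apply Polynomial.eq_of_infinite_eval_eq
    apply Set.Infinite.mono (s := (fun m : ℕ => (m : ℚ)) '' Set.Ici 1)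
    · rintro x ⟨m, hm, rfl⟩
      show Q.eval _ = P.eval _
      rw [hQ' m hm, hP, sum_range_pow]
      simp [Polynomial.eval_finset_sum, div_eq_mul_inv, mul_assoc, mul_comm, mul_left_comm]
    · exact Set.Infinite.image (fun a _ b _ h => Nat.cast_injective h) (Set.Ici_infinite 1)
  rw [hQP, hP, Polynomial.finset_sum_coeff]
  rw [Finset.sum_eq_single n]
  · rw [show n + 1 - n = 1 by omega, Polynomial.coeff_C_mul, Polynomial.coeff_X_pow,
      if_pos rfl, mul_one, Nat.choose_succ_self_right]
    field_simp
    simp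
  · intro i hi hne
    rw [Finset.mem_range] at hi
    rw [Polynomial.coeff_C_mul, Polynomial.coeff_X_pow, if_neg (by omega), mul_zero]
  · intro h; simp at h
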